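/- Let n and m be positive integers with m ≤ n, and let a_1 < a_2 < ... < a_m be distinct positive integers. Then the power sum polynomials p_{a_1}, p_{a_2}, ..., p_{a_m}, where p_a = x_1^a + x_2^a + ... + x_n^a in the polynomial ring ℂ[x_1, ..., x_n], are algebraically independent over ℂ. -/

import Mathlib

open MvPolynomial

-- chain rule
lemma ps_chain {n m : ℕ} (p : Fin m → MvPolynomial (Fin n) ℂ) (i : Fin n)
    (Q : MvPolynomial (Fin m) ℂ) :
    pderiv i (aeval p Q) = ∑ j, aeval p (pderiv j Q) * pderiv i (p j) := by
  induction Q using MvPolynomial.induction_on with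
  | C c => simp
  | add f g hf hg =>
    rw [map_add, map_add, hf, hg, ← Finset.sum_add_distrib]
    exact Finset.sum_congr rfl fun k _ => by simp [add_mul]
  | mul_X f j hf =>
    have h1 : ∀ k : Fin m, (pderiv k) (f * X j)
        = pderiv k f * X j + f * (if j = k then 1 else 0) := by
      intro k
      rw [pderiv_mul]
      by_cases h : j = k
      · subst h; simp
      · rw [if_neg h, pderiv_X_of_ne h]
    simp only [map_mul, aeval_X, pderiv_mul, hf, h1, map_add, add_mul,
      Finset.sum_add_distrib]
    congr 1
    · rw [Finset.sum_mul]
      exact Finset.sum_congr rfl fun k _ => by ring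
    · simp only [map_mul, apply_ite (aeval p), map_one, map_zero, mul_ite, mul_one, mul_zero,
        ite_mul, zero_mul, Finset.sum_ite_eq, Finset.mem_univ, if_true]

lemma ps_coeff_pderiv {σ : Type*} [DecidableEq σ] (i : σ) (Q : MvPolynomial σ ℂ) (d : σ →₀ ℕ) :
    coeff d (pderiv i Q) = ((d i : ℂ) + 1) * coeff (d + Finsupp.single i 1) Q := by
  induction Q using MvPolynomial.induction_on' with
  | add f g hf hg => simp [hf, hg, mul_add]
  | monomial s c =>
    rw [pderiv_monomial, coeff_monomial, coeff_monomial]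
    by_cases h : s = d + Finsupp.single i 1
    · subst h
      have h1 : d + Finsupp.single i 1 - Finsupp.single i 1 = d := by
        ext j; simp [Finsupp.single_apply]
      have h2 : (d + Finsupp.single i 1 : σ →₀ ℕ) i = d i + 1 := by simp
      rw [if_pos h1, if_pos rfl, h2]
      push_cast; ring
    · rw [if_neg h]
      by_cases h2 : s - Finsupp.single i 1 = d
      · rw [if_pos h2]
        have hs : s i = 0 := by
          by_contra hs
          apply h
          rw [← h2]
          ext j
          by_cases hj : j = i
          · subst hj; simp [Nat.sub_add_cancel (Nat.one_le_iff_ne_zero.2 hs)]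
          · simp [Finsupp.single_apply, Ne.symm hj]
        simp [hs]
      · rw [if_neg h2, mul_zero]

lemma ps_support_pderiv {σ : Type*} [DecidableEq σ] {i : σ} {Q : MvPolynomial σ ℂ} {d : σ →₀ ℕ}
    (hd : d ∈ (pderiv i Q).support) : d + Finsupp.single i 1 ∈ Q.support := by
  rw [MvPolynomial.mem_support_iff] at hd ⊢
  intro h
  rw [ps_coeff_pderiv, h, mul_zero] at hd
  exact hd rfl

lemma ps_td_pderiv_lt {σ : Type*} [DecidableEq σ] {i : σ} {Q : MvPolynomial σ ℂ}
    (h : pderiv i Q ≠ 0) : (pderiv i Q).totalDegree < Q.totalDegree := by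
  rw [totalDegree]
  apply Finset.sup_lt_iff (α := ℕ) ?_ |>.2
  · intro d hd
    have h2 := MvPolynomial.le_totalDegree (ps_support_pderiv hd)
    have h3 : (d + Finsupp.single i 1).sum (fun _ e => e) = d.sum (fun _ e => e) + 1 := by
      rw [Finsupp.sum_add_index' (fun _ => rfl) (fun _ _ _ => rfl)]
      simp
    omega
  · have : (pderiv i Q).support.Nonempty := MvPolynomial.support_nonempty.2 h
    obtain ⟨d, hd⟩ := this
    have h2 := MvPolynomial.le_totalDegree (ps_support_pderiv hd)
    have : 0 < Q.totalDegree := by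
      have h3 : (d + Finsupp.single i 1).sum (fun _ e => e) = d.sum (fun _ e => e) + 1 := by
        rw [Finsupp.sum_add_index' (fun _ => rfl) (fun _ _ _ => rfl)]
        simp
      omega
    simpa using this

lemma ps_const_of_pderiv_zero {σ : Type*} [DecidableEq σ] {Q : MvPolynomial σ ℂ}
    (h : ∀ i, pderiv i Q = 0) : Q.totalDegree = 0 := by
  rw [MvPolynomial.totalDegree_eq_zero_iff]
  intro d hd i
  by_contra hdi
  have h1 : d - Finsupp.single i 1 + Finsupp.single i 1 = d := by
    ext j
    by_cases hj : j = i
    · subst hj; simp [Nat.sub_add_cancel (Nat.one_le_iff_ne_zero.2 hdi)]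
    · simp [Finsupp.single_apply, Ne.symm hj]
  have h2 := ps_coeff_pderiv i Q (d - Finsupp.single i 1)
  rw [h i, h1] at h2
  rw [MvPolynomial.mem_support_iff] at hd
  have hne : ((d - Finsupp.single i 1 : σ →₀ ℕ) i : ℂ) + 1 ≠ 0 := by
    have : (((d - Finsupp.single i 1 : σ →₀ ℕ) i + 1 : ℕ) : ℂ) ≠ 0 := Nat.cast_ne_zero.2 (by omega)
    push_cast at this
    exact this
  rw [coeff_zero] at h2
  rcases mul_eq_zero.1 h2.symm with h' | h'
  · exact hne h'
  · exact hd h'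

lemma ps_det_ne_zero {n m : ℕ} (hmn : m ≤ n) (b : Fin m → ℕ) (hb : Function.Injective b)
    (c : Fin m → ℂ) (hc : ∀ j, c j ≠ 0) :
    (Matrix.of fun i j : Fin m =>
      (C (c j) * X (Fin.castLE hmn i) ^ b j : MvPolynomial (Fin n) ℂ)).det ≠ 0 := by
  classical
  set e : Fin n →₀ ℕ := ∑ i : Fin m, Finsupp.single (Fin.castLE hmn i) (b i) with he
  have hk : ∀ (τ : Fin m → Fin m), Function.Injective τ → ∀ k,
      (∑ i : Fin m, Finsupp.single (Fin.castLE hmn (τ i)) (b i)) (Fin.castLE hmn (τ k))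
        = b k := by
    intro τ hτ k
    rw [Finsupp.finset_sum_apply]
    rw [Finset.sum_eq_single k]
    · simp
    · intro j _ hj
      rw [Finsupp.single_apply, if_neg]
      intro hc'
      exact hj (hτ (Fin.castLE_injective hmn hc'))
    · simp
  have key : ∀ σ : Equiv.Perm (Fin m),
      (∏ i, (C (c i) * X (Fin.castLE hmn (σ i)) ^ b i : MvPolynomial (Fin n) ℂ))
        = monomial (∑ i : Fin m, Finsupp.single (Fin.castLE hmn (σ i)) (b i)) (∏ i, c i) := by
    intro σ
    simp only [X_pow_eq_monomial]
    rw [Finset.prod_mul_distrib, ← map_prod, monomial_sum_index]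
  have hmono : ∀ σ : Equiv.Perm (Fin m),
      (∑ i : Fin m, Finsupp.single (Fin.castLE hmn (σ i)) (b i)) = e ↔ σ = 1 := by
    intro σ
    constructor
    · intro h
      ext k
      have h1 : b k = b (σ k) := by
        have h1 := hk σ σ.injective k
        rw [h] at h1
        have h2 := hk id Function.injective_id (σ k)
        simp only [id_eq] at h2
        rw [← he] at h2
        rw [h2] at h1
        exact h1.symm
      rw [Equiv.Perm.one_apply]
      exact congrArg Fin.val (hb h1).symm
    · rintro rfl
      simp [he, Equiv.Perm.one_apply]
  have hcoeff : coeff e ((Matrix.of fun i j : Fin m =>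
      (C (c j) * X (Fin.castLE hmn i) ^ b j : MvPolynomial (Fin n) ℂ)).det) = ∏ i, c i := by
    rw [Matrix.det_apply]
    rw [coeff_sum]
    simp only [Matrix.of_apply]
    rw [Finset.sum_eq_single (1 : Equiv.Perm (Fin m))]
    · rw [key 1]
      simp only [Equiv.Perm.sign_one, one_smul]
      rw [coeff_monomial, if_pos ((hmono 1).2 rfl)]
    · intro σ _ hσ
      rw [coeff_smul, key σ, coeff_monomial, if_neg (fun h => hσ ((hmono σ).1 h)), smul_zero]
    · simp
  intro h
  rw [h, coeff_zero] at hcoeff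
  exact (Finset.prod_ne_zero_iff.2 fun j _ => hc j) hcoeff.symm

/-- For `m ≤ n` and distinct positive exponents `a_1 < … < a_m`, the power sum
polynomials `p_{a_j} = ∑_{i=1}^n x_i^{a_j}` in `ℂ[x_1,…,x_n]` are algebraically
independent over `ℂ`. -/
theorem powerSums_algebraicIndependent
    (n m : ℕ) (hn : 0 < n) (hm : 0 < m) (hmn : m ≤ n)
    (a : Fin m → ℕ) (ha : StrictMono a) (hapos : ∀ j, 0 < a j) :
    AlgebraicIndependent ℂ
      (fun j : Fin m => ∑ i : Fin n, (X i : MvPolynomial (Fin n) ℂ) ^ a j) := by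
  classical
  set p : Fin m → MvPolynomial (Fin n) ℂ := fun j => ∑ i : Fin n, X i ^ a j with hp
  rw [algebraicIndependent_iff]
  suffices H : ∀ N (Q : MvPolynomial (Fin m) ℂ), Q.totalDegree ≤ N → aeval p Q = 0 → Q = 0 by
    intro Q hQ
    exact H Q.totalDegree Q le_rfl hQ
  have hbase : ∀ Q : MvPolynomial (Fin m) ℂ, Q.totalDegree = 0 → aeval p Q = 0 → Q = 0 := by
    intro Q hQ0 h0
    have hQC : Q = C (coeff 0 Q) := by
      ext d
      rw [coeff_C]
      split_ifs with hd
      · rw [← hd]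
      · rw [← MvPolynomial.notMem_support_iff]
        intro hmem
        exact hd (Finsupp.ext fun i =>
          ((MvPolynomial.totalDegree_eq_zero_iff _ Q).1 hQ0 d hmem i)).symm
    rw [hQC] at h0 ⊢
    rw [aeval_C, MvPolynomial.algebraMap_eq] at h0
    have hc0 : coeff 0 Q = 0 := by
      rwa [← map_zero (C : ℂ →+* MvPolynomial (Fin n) ℂ), C_inj] at h0
    rw [hc0, map_zero]
  -- derivative of the power sums
  have hpd : ∀ (i' : Fin n) (j : Fin m),
      pderiv i' (p j) = C ((a j : ℂ)) * X i' ^ (a j - 1) := by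
    intro i' j
    rw [hp]
    simp only [map_sum]
    rw [Finset.sum_eq_single i']
    · rw [pderiv_pow, pderiv_X_self, mul_one, C_eq_coe_nat]
    · intro k _ hk
      rw [pderiv_pow, pderiv_X_of_ne hk, mul_zero]
    · simp
  -- the Jacobian matrix restricted to the first m variables
  set M : Matrix (Fin m) (Fin m) (MvPolynomial (Fin n) ℂ) := Matrix.of fun i j : Fin m =>
    (C ((a j : ℂ)) * X (Fin.castLE hmn i) ^ (a j - 1) : MvPolynomial (Fin n) ℂ) with hM
  have hdet : M.det ≠ 0 := by
    apply ps_det_ne_zero hmn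
    · intro x y hxy
      have hxy' : a x - 1 = a y - 1 := hxy
      have hx := hapos x
      have hy := hapos y
      have : a x = a y := by omega
      exact ha.injective this
    · intro j
      exact_mod_cast (hapos j).ne'
  intro N
  induction N with
  | zero =>
    intro Q hQ h0
    exact hbase Q (Nat.le_zero.1 hQ) h0
  | succ N IH =>
    intro Q hQ h0
    by_cases hd : Q.totalDegree = 0
    · exact hbase Q hd h0
    -- the vector of partials
    set v : Fin m → MvPolynomial (Fin n) ℂ := fun j => aeval p (pderiv j Q) with hv
    have hMv : M.mulVec v = 0 := by
      funext i
      have hc := ps_chain p (Fin.castLE hmn i) Q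
      rw [h0, map_zero] at hc
      have : M.mulVec v i = ∑ j, v j * pderiv (Fin.castLE hmn i) (p j) := by
        rw [Matrix.mulVec, dotProduct]
        exact Finset.sum_congr rfl fun j _ => by rw [hM, hv, Matrix.of_apply, hpd, mul_comm]
      rw [Pi.zero_apply, this, ← hc]
    have hv0 : ∀ j, v j = 0 := by
      have h1 : M.det • v = 0 := by
        have h2 := congrArg (Matrix.mulVec M.adjugate) hMv
        rwa [Matrix.mulVec_mulVec, Matrix.adjugate_mul, Matrix.smul_mulVec,
          Matrix.one_mulVec, Matrix.mulVec_zero] at h2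
      intro j
      have h3 := congrFun h1 j
      rw [Pi.smul_apply, Pi.zero_apply, smul_eq_mul] at h3
      rcases mul_eq_zero.1 h3 with h' | h'
      · exact absurd h' hdet
      · exact h'
    have hpz : ∀ j, pderiv j Q = 0 := by
      intro j
      by_contra hne
      have hlt := ps_td_pderiv_lt hne
      have : (pderiv j Q).totalDegree ≤ N := by omega
      exact hne (IH (pderiv j Q) this (hv0 j))
    exact absurd (ps_const_of_pderiv_zero hpz) hd
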